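/- Let u = (ν₁, ν₂) and v = (υ₁, υ₂) be elements of ℤ² and let λ, μ be positive rational numbers such that det(u, v) > 0, ν₁ + ν₂ > 1, υ₁ + υ₂ > 1, and (1, 1) = λ·u + μ·v in ℚ². Then det(u, v) > 1. -/
import Mathlib


/-- The 2×2 determinant of two vectors in `ℤ × ℤ`. -/
def det2 (u v : ℤ × ℤ) : ℤ := u.1 * v.2 - u.2 * v.1

/-- The auxiliary claim (◊): if `u, v ∈ ℤ²` satisfy `det(u,v) > 0`,
`ν₁ + ν₂ > 1`, `υ₁ + υ₂ > 1` and `(1,1) = λ·u + μ·v` with `λ, μ ∈ ℚ_{>0}`,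
then `det(u,v) > 1`. -/
theorem det_gt_one_of_one_one_in_parallelogram (u v : ℤ × ℤ) (l m : ℚ)
    (hl : 0 < l) (hm : 0 < m)
    (hdet : 0 < det2 u v)
    (hu : 1 < u.1 + u.2) (hv : 1 < v.1 + v.2)
    (h1 : (1 : ℚ) = l * (u.1 : ℚ) + m * (v.1 : ℚ))
    (h2 : (1 : ℚ) = l * (u.2 : ℚ) + m * (v.2 : ℚ)) :
    1 < det2 u v := by
  by_contra h
  have hd1 : det2 u v = 1 := by omega
  unfold det2 at hd1
  have hdq : (u.1 : ℚ) * v.2 - u.2 * v.1 = 1 := by exact_mod_cast congrArg (Int.cast : ℤ → ℚ) hd1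
  -- l = v₂ - v₁
  have hlq : l = ((v.2 - v.1 : ℤ) : ℚ) := by
    push_cast
    linear_combination -(v.2 : ℚ) * h1 + (v.1 : ℚ) * h2 - l * hdq
  have hmq : m = ((u.1 - u.2 : ℤ) : ℚ) := by
    push_cast
    linear_combination -(u.1 : ℚ) * h2 + (u.2 : ℚ) * h1 - m * hdq
  have hl1 : (1 : ℚ) ≤ l := by
    rw [hlq] at hl ⊢
    exact_mod_cast (by exact_mod_cast hl : (0 : ℤ) < v.2 - v.1)
  have hm1 : (1 : ℚ) ≤ m := by
    rw [hmq] at hm ⊢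
    exact_mod_cast (by exact_mod_cast hm : (0 : ℤ) < u.1 - u.2)
  have huq : (2 : ℚ) ≤ (u.1 : ℚ) + u.2 := by exact_mod_cast (by omega : (2:ℤ) ≤ u.1 + u.2)
  have hvq : (2 : ℚ) ≤ (v.1 : ℚ) + v.2 := by exact_mod_cast (by omega : (2:ℤ) ≤ v.1 + v.2)
  nlinarith [mul_le_mul hl1 huq (by linarith) (by linarith : (0:ℚ) ≤ l),
             mul_le_mul hm1 hvq (by linarith) (by linarith : (0:ℚ) ≤ m)]
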